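/- Let X = {x, y, z} and U = {u, v, w} be the bases of two distinct 3-maximal submonoids of Σ*, and let g, h : A* → Σ* be the morphisms with g(𝐚) = x, g(𝐛) = y, g(𝐜) = z and h(𝐚) = u, h(𝐛) = v, h(𝐜) = w. If (r, s) and (r', s') are two distinct minimal solutions of (g, h), then r and r' are not prefix comparable, and s and s' are not prefix comparable. -/

import Mathlib

/-- The basis of a submonoid `M` of the free monoid `Σ*`: `(M \ {ε}) \ (M \ {ε})²`. -/
def basisOf {α : Type*} (M : Submonoid (FreeMonoid α)) : Set (FreeMonoid α) :=
  ((M : Set (FreeMonoid α)) \ {1}) \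
    {w | ∃ u ∈ (M : Set (FreeMonoid α)) \ {1}, ∃ v ∈ (M : Set (FreeMonoid α)) \ {1}, w = u * v}

/-- A submonoid of `Σ*` is `k`-maximal if its rank (cardinality of its basis) is at most `k`
and it is maximal (w.r.t. inclusion) among submonoids of rank at most `k`. -/
def IsKMaximal {α : Type*} (k : ℕ) (M : Submonoid (FreeMonoid α)) : Prop :=
  (basisOf M).Finite ∧ (basisOf M).ncard ≤ k ∧
    ∀ M' : Submonoid (FreeMonoid α),
      (basisOf M').Finite → (basisOf M').ncard ≤ k → M ≤ M' → M = M'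

/-- A solution of the pair of morphisms `(g, h)`: a pair `(r, s)` of nonempty words
over the three-letter alphabet with `g r = h s` (an element of the coincidence set). -/
def IsSolution {α : Type*} (g h : FreeMonoid (Fin 3) →* FreeMonoid α)
    (p : FreeMonoid (Fin 3) × FreeMonoid (Fin 3)) : Prop :=
  p.1 ≠ 1 ∧ p.2 ≠ 1 ∧ g p.1 = h p.2

/-- `(p.1, p.2) < (q.1, q.2)`: componentwise proper prefix of pairs of words. -/
def PairLt (p q : FreeMonoid (Fin 3) × FreeMonoid (Fin 3)) : Prop :=
  (∃ z : FreeMonoid (Fin 3), z ≠ 1 ∧ q.1 = p.1 * z) ∧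
  (∃ z : FreeMonoid (Fin 3), z ≠ 1 ∧ q.2 = p.2 * z)

/-- A minimal solution: a solution having no proper (pairwise) prefix which is a solution. -/
def IsMinimalSolution {α : Type*} (g h : FreeMonoid (Fin 3) →* FreeMonoid α)
    (p : FreeMonoid (Fin 3) × FreeMonoid (Fin 3)) : Prop :=
  IsSolution g h p ∧ ∀ q, PairLt q p → ¬ IsSolution g h q

/- ### Auxiliary lemmas -/

lemma basisOf_closure_subset {α : Type*} (S : Set (FreeMonoid α)) :
    basisOf (Submonoid.closure S) ⊆ S := by
  intro b hb
  obtain ⟨⟨hbm, hbne⟩, hnp⟩ := hb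
  have key : ∀ m, m ∈ Submonoid.closure S →
      (m = 1 ∨ m ∈ S ∨ ∃ u ∈ (Submonoid.closure S : Set (FreeMonoid α)) \ {1},
        ∃ v ∈ (Submonoid.closure S : Set (FreeMonoid α)) \ {1}, m = u * v) := by
    intro m hm
    induction hm using Submonoid.closure_induction with
    | mem x hx => exact Or.inr (Or.inl hx)
    | one => exact Or.inl rfl
    | mul a c ha hc pa pc =>
      by_cases h1 : a = 1
      · subst h1; simpa using pc
      by_cases h2 : c = 1
      · subst h2; simpa using pa
      · exact Or.inr (Or.inr ⟨a, ⟨ha, h1⟩, c, ⟨hc, h2⟩, rfl⟩)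
  rcases key b hbm with rfl | hS | hprod
  · exact absurd rfl hbne
  · exact hS
  · exact absurd hprod hnp

lemma basis_ne_one {α : Type*} {M : Submonoid (FreeMonoid α)} {b : FreeMonoid α}
    (hb : b ∈ basisOf M) : b ≠ 1 := hb.1.2

lemma prefix_code_of_max {α : Type*} (u v w : FreeMonoid α)
    (hcard : ({u, v, w} : Set (FreeMonoid α)).ncard = 3)
    (hbasis : basisOf (Submonoid.closure {u, v, w}) = {u, v, w})
    (hmax : IsKMaximal 3 (Submonoid.closure ({u, v, w} : Set (FreeMonoid α)))) :
    ∀ b ∈ ({u, v, w} : Set (FreeMonoid α)), ∀ b' ∈ ({u, v, w} : Set (FreeMonoid α)),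
      ∀ t, b' = b * t → t = 1 := by
  intro b hb b' hb' t hbt
  by_contra htne
  have hUfin : ({u, v, w} : Set (FreeMonoid α)).Finite := Set.toFinite _
  have hbb' : b ≠ b' := by
    rintro rfl
    exact htne (by simpa using (left_eq_mul.mp hbt))
  set T : Set (FreeMonoid α) := ({u, v, w} : Set (FreeMonoid α)) \ {b'} with hT
  set S' : Set (FreeMonoid α) := insert t T with hS'
  have hbT : b ∈ T := ⟨hb, by simpa using hbb'⟩
  have hTfin : T.Finite := hUfin.diff
  have hS'fin : S'.Finite := hTfin.insert _
  have hle : Submonoid.closure ({u, v, w} : Set (FreeMonoid α)) ≤ Submonoid.closure S' := by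
    rw [Submonoid.closure_le]
    intro c hc
    by_cases hcb : c = b'
    · subst hcb
      rw [hbt]
      exact mul_mem (Submonoid.subset_closure (Or.inr hbT))
        (Submonoid.subset_closure (Or.inl rfl))
    · exact Submonoid.subset_closure (Or.inr ⟨hc, by simpa using hcb⟩)
  have hbasisS' : basisOf (Submonoid.closure S') ⊆ S' := basisOf_closure_subset S'
  have hbfinS' : (basisOf (Submonoid.closure S')).Finite := hS'fin.subset hbasisS'
  have hcardS' : (basisOf (Submonoid.closure S')).ncard ≤ 3 := by
    have h1 : (basisOf (Submonoid.closure S')).ncard ≤ S'.ncard :=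
      Set.ncard_le_ncard hbasisS' hS'fin
    have h2 : S'.ncard ≤ T.ncard + 1 := Set.ncard_insert_le _ _
    have h3 : T.ncard = 2 := by
      rw [hT, Set.ncard_diff_singleton_of_mem hb', hcard]
    omega
  have heq : Submonoid.closure ({u, v, w} : Set (FreeMonoid α)) = Submonoid.closure S' :=
    hmax.2.2 _ hbfinS' hcardS' hle
  have htM : t ∈ Submonoid.closure ({u, v, w} : Set (FreeMonoid α)) := by
    rw [heq]; exact Submonoid.subset_closure (Or.inl rfl)
  have hbM : b ∈ Submonoid.closure ({u, v, w} : Set (FreeMonoid α)) :=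
    Submonoid.subset_closure hb
  have hbne1 : b ≠ 1 := by
    refine basis_ne_one (M := Submonoid.closure ({u, v, w} : Set (FreeMonoid α))) ?_
    rw [hbasis]; exact hb
  have hb'basis : b' ∈ basisOf (Submonoid.closure ({u, v, w} : Set (FreeMonoid α))) := by
    rw [hbasis]; exact hb'
  exact hb'basis.2 ⟨b, ⟨hbM, hbne1⟩, t, ⟨htM, htne⟩, hbt⟩

lemma img_eq_one {α : Type*} (φ : FreeMonoid (Fin 3) →* FreeMonoid α)
    (hne : ∀ c : Fin 3, φ (FreeMonoid.of c) ≠ 1) :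
    ∀ s : FreeMonoid (Fin 3), φ s = 1 → s = 1 := by
  intro s
  induction s using FreeMonoid.recOn with
  | one => intro _; rfl
  | of_mul c s _ =>
    intro hcs
    rw [map_mul] at hcs
    have h2 : FreeMonoid.toList (φ (FreeMonoid.of c)) ++ FreeMonoid.toList (φ s)
        = ([] : List α) := by
      rw [← FreeMonoid.toList_mul, hcs, FreeMonoid.toList_one]
    rw [List.append_eq_nil_iff] at h2
    exact absurd (FreeMonoid.toList.injective (by rw [h2.1, FreeMonoid.toList_one])) (hne c)

lemma decode {α : Type*} (φ : FreeMonoid (Fin 3) →* FreeMonoid α)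
    (hne : ∀ c : Fin 3, φ (FreeMonoid.of c) ≠ 1)
    (H : ∀ c d : Fin 3, ∀ m : FreeMonoid α,
      φ (FreeMonoid.of d) = φ (FreeMonoid.of c) * m → c = d) :
    ∀ (r s : FreeMonoid (Fin 3)) (m : FreeMonoid α),
      φ r * m = φ s → ∃ t : FreeMonoid (Fin 3), s = r * t ∧ φ t = m := by
  intro r
  induction r using FreeMonoid.recOn with
  | one => intro s m hm; exact ⟨s, (one_mul s).symm, by simpa using hm.symm⟩
  | of_mul c r ihr =>
    intro s m hm
    induction s using FreeMonoid.recOn with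
    | one =>
      exfalso
      rw [map_mul, map_one, mul_assoc] at hm
      have h2 : FreeMonoid.toList (φ (FreeMonoid.of c)) ++ FreeMonoid.toList (φ r * m)
          = ([] : List α) := by
        rw [← FreeMonoid.toList_mul, hm, FreeMonoid.toList_one]
      rw [List.append_eq_nil_iff] at h2
      exact hne c (FreeMonoid.toList.injective (by rw [h2.1, FreeMonoid.toList_one]))
    | of_mul d s _ =>
      rw [map_mul, map_mul, mul_assoc] at hm
      have hl : FreeMonoid.toList (φ (FreeMonoid.of c)) ++ FreeMonoid.toList (φ r * m) =
          FreeMonoid.toList (φ (FreeMonoid.of d)) ++ FreeMonoid.toList (φ s) := by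
        rw [← FreeMonoid.toList_mul, ← FreeMonoid.toList_mul, hm]
      have hcd : c = d := by
        rcases List.append_eq_append_iff.mp hl with ⟨e, he, _⟩ | ⟨e, he, _⟩
        · refine H c d (FreeMonoid.ofList e) (FreeMonoid.toList.injective ?_)
          rw [FreeMonoid.toList_mul, FreeMonoid.toList_ofList]; exact he
        · refine (H d c (FreeMonoid.ofList e) (FreeMonoid.toList.injective ?_)).symm
          rw [FreeMonoid.toList_mul, FreeMonoid.toList_ofList]; exact he
      subst hcd
      have hrs : φ r * m = φ s := mul_left_cancel hm
      obtain ⟨t, hts, htm⟩ := ihr s m hrs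
      exact ⟨t, by rw [hts, mul_assoc], htm⟩


/-- Key step: if `a, b` are solutions, `b` is minimal, `a ≠ b`, and `a.1` is a prefix
of `b.1`, we get a contradiction (decoding on the `h` side). -/
lemma key_fst {α : Type*} (g h : FreeMonoid (Fin 3) →* FreeMonoid α)
    (hgne : ∀ c : Fin 3, g (FreeMonoid.of c) ≠ 1)
    (hhne : ∀ c : Fin 3, h (FreeMonoid.of c) ≠ 1)
    (hH : ∀ c d : Fin 3, ∀ m : FreeMonoid α,
      h (FreeMonoid.of d) = h (FreeMonoid.of c) * m → c = d)
    (a b : FreeMonoid (Fin 3) × FreeMonoid (Fin 3))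
    (ha : IsSolution g h a) (hb : IsSolution g h b)
    (hbmin : ∀ r, PairLt r b → ¬ IsSolution g h r)
    (hab : a ≠ b) (t : FreeMonoid (Fin 3)) (ht : b.1 = a.1 * t) : False := by
  obtain ⟨ha1, ha2, haeq⟩ := ha
  have hmain : h a.2 * g t = h b.2 := by
    rw [← haeq, ← map_mul, ← ht, hb.2.2]
  obtain ⟨s, hs, hsm⟩ := decode h hhne hH a.2 b.2 (g t) hmain
  by_cases t1 : t = 1
  · subst t1
    rw [mul_one] at ht
    have : s = 1 := img_eq_one h hhne s (by rw [hsm, map_one])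
    subst this
    rw [mul_one] at hs
    exact hab (Prod.ext ht.symm hs.symm)
  · have hgt : g t ≠ 1 := fun hc => t1 (img_eq_one g hgne t hc)
    have hs1 : s ≠ 1 := fun hc => hgt (by rw [← hsm, hc, map_one])
    exact hbmin a ⟨⟨t, t1, ht⟩, ⟨s, hs1, hs⟩⟩ ⟨ha1, ha2, haeq⟩

/-- Same, with the roles of the two components swapped (decoding on the `g` side). -/
lemma key_snd {α : Type*} (g h : FreeMonoid (Fin 3) →* FreeMonoid α)
    (hgne : ∀ c : Fin 3, g (FreeMonoid.of c) ≠ 1)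
    (hhne : ∀ c : Fin 3, h (FreeMonoid.of c) ≠ 1)
    (hG : ∀ c d : Fin 3, ∀ m : FreeMonoid α,
      g (FreeMonoid.of d) = g (FreeMonoid.of c) * m → c = d)
    (a b : FreeMonoid (Fin 3) × FreeMonoid (Fin 3))
    (ha : IsSolution g h a) (hb : IsSolution g h b)
    (hbmin : ∀ r, PairLt r b → ¬ IsSolution g h r)
    (hab : a ≠ b) (t : FreeMonoid (Fin 3)) (ht : b.2 = a.2 * t) : False := by
  obtain ⟨ha1, ha2, haeq⟩ := ha
  have hmain : g a.1 * h t = g b.1 := by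
    rw [haeq, ← map_mul, ← ht, hb.2.2]
  obtain ⟨s, hs, hsm⟩ := decode g hgne hG a.1 b.1 (h t) hmain
  by_cases t1 : t = 1
  · subst t1
    rw [mul_one] at ht
    have : s = 1 := img_eq_one g hgne s (by rw [hsm, map_one])
    subst this
    rw [mul_one] at hs
    exact hab (Prod.ext hs.symm ht.symm)
  · have hht : h t ≠ 1 := fun hc => t1 (img_eq_one h hhne t hc)
    have hs1 : s ≠ 1 := fun hc => hht (by rw [← hsm, hc, map_one])
    exact hbmin a ⟨⟨s, hs1, hs⟩, ⟨t, t1, ht⟩⟩ ⟨ha1, ha2, haeq⟩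


/-- Components of distinct minimal solutions are pairwiseprefix-incomparable. -/
theorem minimal_solutions_not_prefix_comparable {α : Type*}
    (x y z u v w : FreeMonoid α)
    (hXcard : ({x, y, z} : Set (FreeMonoid α)).ncard = 3)
    (hUcard : ({u, v, w} : Set (FreeMonoid α)).ncard = 3)
    (hXU : ({x, y, z} : Set (FreeMonoid α)) ≠ {u, v, w})
    (hXbasis : basisOf (Submonoid.closure {x, y, z}) = {x, y, z})
    (hUbasis : basisOf (Submonoid.closure {u, v, w}) = {u, v, w})
    (hXmax : IsKMaximal 3 (Submonoid.closure ({x, y, z} : Set (FreeMonoid α))))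
    (hUmax : IsKMaximal 3 (Submonoid.closure ({u, v, w} : Set (FreeMonoid α))))
    (g h : FreeMonoid (Fin 3) →* FreeMonoid α)
    (hga : g (FreeMonoid.of 0) = x) (hgb : g (FreeMonoid.of 1) = y)
    (hgc : g (FreeMonoid.of 2) = z)
    (hha : h (FreeMonoid.of 0) = u) (hhb : h (FreeMonoid.of 1) = v)
    (hhc : h (FreeMonoid.of 2) = w)
    (p q : FreeMonoid (Fin 3) × FreeMonoid (Fin 3))
    (hp : IsMinimalSolution g h p) (hq : IsMinimalSolution g h q) (hpq : p ≠ q) :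
    ¬ ((∃ t : FreeMonoid (Fin 3), q.1 = p.1 * t) ∨ (∃ t : FreeMonoid (Fin 3), p.1 = q.1 * t)) ∧
    ¬ ((∃ t : FreeMonoid (Fin 3), q.2 = p.2 * t) ∨ (∃ t : FreeMonoid (Fin 3), p.2 = q.2 * t)) := by
  have hdistinct : ∀ a b c : FreeMonoid α, ({a, b, c} : Set (FreeMonoid α)).ncard = 3 →
      a ≠ b ∧ a ≠ c ∧ b ≠ c := by
    intro a b c hcard
    refine ⟨?_, ?_, ?_⟩ <;> rintro rfl
    · have he : ({a, a, c} : Set (FreeMonoid α)) = {a, c} := by ext; aesop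
      rw [he] at hcard
      have h2 := Set.ncard_insert_le a ({c} : Set (FreeMonoid α))
      rw [Set.ncard_singleton] at h2; omega
    · have he : ({a, b, a} : Set (FreeMonoid α)) = {a, b} := by ext; aesop
      rw [he] at hcard
      have h2 := Set.ncard_insert_le a ({b} : Set (FreeMonoid α))
      rw [Set.ncard_singleton] at h2; omega
    · have he : ({a, b, b} : Set (FreeMonoid α)) = {a, b} := by ext; aesop
      rw [he] at hcard
      have h2 := Set.ncard_insert_le a ({b} : Set (FreeMonoid α))
      rw [Set.ncard_singleton] at h2; omega
  obtain ⟨hxy, hxz, hyz⟩ := hdistinct x y z hXcard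
  obtain ⟨huv, huw, hvw⟩ := hdistinct u v w hUcard
  have hgmem : ∀ c : Fin 3, g (FreeMonoid.of c) ∈ ({x, y, z} : Set (FreeMonoid α)) := by
    intro c
    match c with
    | 0 => rw [hga]; exact Or.inl rfl
    | 1 => rw [hgb]; exact Or.inr (Or.inl rfl)
    | 2 => rw [hgc]; exact Or.inr (Or.inr rfl)
  have hhmem : ∀ c : Fin 3, h (FreeMonoid.of c) ∈ ({u, v, w} : Set (FreeMonoid α)) := by
    intro c
    match c with
    | 0 => rw [hha]; exact Or.inl rfl
    | 1 => rw [hhb]; exact Or.inr (Or.inl rfl)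
    | 2 => rw [hhc]; exact Or.inr (Or.inr rfl)
  have hgne : ∀ c : Fin 3, g (FreeMonoid.of c) ≠ 1 := by
    intro c
    refine basis_ne_one (M := Submonoid.closure ({x, y, z} : Set (FreeMonoid α))) ?_
    rw [hXbasis]; exact hgmem c
  have hhne : ∀ c : Fin 3, h (FreeMonoid.of c) ≠ 1 := by
    intro c
    refine basis_ne_one (M := Submonoid.closure ({u, v, w} : Set (FreeMonoid α))) ?_
    rw [hUbasis]; exact hhmem c
  have hXpc := prefix_code_of_max x y z hXcard hXbasis hXmax
  have hUpc := prefix_code_of_max u v w hUcard hUbasis hUmax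
  have hginj : ∀ c d : Fin 3, g (FreeMonoid.of c) = g (FreeMonoid.of d) → c = d := by
    intro c d hm
    match c, d with
    | 0, 0 => rfl
    | 1, 1 => rfl
    | 2, 2 => rfl
    | 0, 1 => rw [hga, hgb] at hm; exact absurd hm hxy
    | 1, 0 => rw [hgb, hga] at hm; exact absurd hm.symm hxy
    | 0, 2 => rw [hga, hgc] at hm; exact absurd hm hxz
    | 2, 0 => rw [hgc, hga] at hm; exact absurd hm.symm hxz
    | 1, 2 => rw [hgb, hgc] at hm; exact absurd hm hyz
    | 2, 1 => rw [hgc, hgb] at hm; exact absurd hm.symm hyz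
  have hhinj : ∀ c d : Fin 3, h (FreeMonoid.of c) = h (FreeMonoid.of d) → c = d := by
    intro c d hm
    match c, d with
    | 0, 0 => rfl
    | 1, 1 => rfl
    | 2, 2 => rfl
    | 0, 1 => rw [hha, hhb] at hm; exact absurd hm huv
    | 1, 0 => rw [hhb, hha] at hm; exact absurd hm.symm huv
    | 0, 2 => rw [hha, hhc] at hm; exact absurd hm huw
    | 2, 0 => rw [hhc, hha] at hm; exact absurd hm.symm huw
    | 1, 2 => rw [hhb, hhc] at hm; exact absurd hm hvw
    | 2, 1 => rw [hhc, hhb] at hm; exact absurd hm.symm hvw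
  have hG : ∀ c d : Fin 3, ∀ m : FreeMonoid α,
      g (FreeMonoid.of d) = g (FreeMonoid.of c) * m → c = d := by
    intro c d m hm
    have hm1 : m = 1 := hXpc _ (hgmem c) _ (hgmem d) m hm
    rw [hm1, mul_one] at hm
    exact (hginj d c hm).symm
  have hH : ∀ c d : Fin 3, ∀ m : FreeMonoid α,
      h (FreeMonoid.of d) = h (FreeMonoid.of c) * m → c = d := by
    intro c d m hm
    have hm1 : m = 1 := hUpc _ (hhmem c) _ (hhmem d) m hm
    rw [hm1, mul_one] at hm
    exact (hhinj d c hm).symm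
  refine ⟨?_, ?_⟩
  · rintro (⟨t, ht⟩ | ⟨t, ht⟩)
    · exact key_fst g h hgne hhne hH p q hp.1 hq.1 hq.2 hpq t ht
    · exact key_fst g h hgne hhne hH q p hq.1 hp.1 hp.2 hpq.symm t ht
  · rintro (⟨t, ht⟩ | ⟨t, ht⟩)
    · exact key_snd g h hgne hhne hG p q hp.1 hq.1 hq.2 hpq t ht
    · exact key_snd g h hgne hhne hG q p hq.1 hp.1 hp.2 hpq.symm t ht
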